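/- Let N ≥ 1 be an integer and 0 < λ ≤ Λ. Let w ∈ C¹([0, ∞)) ∩ C²((0, ∞)) satisfy w(0) = 1, w'(0) = 0, and w''(r) = M(−((N−1)/r)·m(w'(r)) − w(r)) for all r > 0. Then w is oscillatory: for every r > 0 there exists τ > r with w(τ) = 0. -/

import Mathlib

noncomputable def Mfun (lam Lam s : ℝ) : ℝ := if 0 < s then s / Lam else s / lam
noncomputable def mfun (lam Lam s : ℝ) : ℝ := if 0 < s then Lam * s else lam * s

noncomputable def D1 (u : ℝ → ℝ) : ℝ → ℝ := derivWithin u (Set.Icc 0 1)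
noncomputable def D2 (u : ℝ → ℝ) : ℝ → ℝ := derivWithin (D1 u) (Set.Ioc 0 1)

/-- A (possibly trivial) solution of the radial eigenvalue problem on the unit ball. -/
def RadialEigen (N : ℕ) (lam Lam μ : ℝ) (v : ℝ → ℝ) : Prop :=
  ContDiffOn ℝ 1 v (Set.Icc 0 1) ∧ ContDiffOn ℝ 2 v (Set.Ioc 0 1) ∧
  (∀ r ∈ Set.Ioc (0:ℝ) 1,
    D2 v r = Mfun lam Lam (-(((N:ℝ) - 1) / r) * mfun lam Lam (D1 v r) - μ * v r)) ∧
  D1 v 0 = 0 ∧ v 1 = 0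

def RadialIVPSol (N : ℕ) (lam Lam : ℝ) (w : ℝ → ℝ) : Prop :=
  ContDiffOn ℝ 1 w (Set.Ici 0) ∧ ContDiffOn ℝ 2 w (Set.Ioi 0) ∧
  w 0 = 1 ∧ derivWithin w (Set.Ici 0) 0 = 0 ∧
  ∀ r ∈ Set.Ioi (0:ℝ),
    deriv (deriv w) r = Mfun lam Lam (-(((N:ℝ) - 1) / r) * mfun lam Lam (deriv w r) - w r)

namespace Stmt14Aux

open Set

/-- Mean value bound: if `f' ≤ m` on `[a,b]` then `f b - f a ≤ m (b - a)`. -/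
lemma slope_le (a b m : ℝ) (f f' : ℝ → ℝ) (hab : a ≤ b)
    (hf : ∀ x ∈ Icc a b, HasDerivAt f (f' x) x)
    (hm : ∀ x ∈ Icc a b, f' x ≤ m) :
    f b - f a ≤ m * (b - a) := by
  set g : ℝ → ℝ := fun x => m * x - f x with hg
  have hg' : ∀ x ∈ Icc a b, HasDerivAt g (m - f' x) x := by
    intro x hx
    have := ((hasDerivAt_id x).const_mul m).sub (hf x hx)
    simp only [mul_one] at this
    exact this
  have hmono : MonotoneOn g (Icc a b) := by
    apply monotoneOn_of_deriv_nonneg (convex_Icc a b)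
    · exact fun x hx => (hg' x hx).continuousAt.continuousWithinAt
    · exact fun x hx => ((hg' x (interior_subset hx)).differentiableAt).differentiableWithinAt
    · intro x hx
      rw [(hg' x (interior_subset hx)).deriv]
      have := hm x (interior_subset hx)
      linarith
  have := hmono (left_mem_Icc.2 hab) (right_mem_Icc.2 hab) hab
  simp only [hg] at this
  linarith

lemma slope_ge (a b m : ℝ) (f f' : ℝ → ℝ) (hab : a ≤ b)
    (hf : ∀ x ∈ Icc a b, HasDerivAt f (f' x) x)
    (hm : ∀ x ∈ Icc a b, m ≤ f' x) :
    m * (b - a) ≤ f b - f a := by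
  have := slope_le a b (-m) (fun x => -f x) (fun x => -f' x) hab
    (fun x hx => (hf x hx).neg) (fun x hx => by have := hm x hx; linarith)
  linarith

/-- Riccati blow-up: no global solution of `ρ' ≥ (ρ² + q₀)/2` on a ray. -/
lemma riccati_blowup (R q0 : ℝ) (hq0 : 0 < q0) (ρ ρ' : ℝ → ℝ)
    (hd : ∀ r ∈ Ici R, HasDerivAt ρ (ρ' r) r)
    (hineq : ∀ r ∈ Ici R, (ρ r ^ 2 + q0) / 2 ≤ ρ' r) : False := by
  set a : ℝ := R + 2 * (1 + |ρ R|) / q0 with ha_def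
  have haR : R ≤ a := by
    have : 0 ≤ 2 * (1 + |ρ R|) / q0 := by positivity
    rw [ha_def]; linarith
  have hsub : Icc R a ⊆ Ici R := Icc_subset_Ici_self
  have h1 : q0 / 2 * (a - R) ≤ ρ a - ρ R := by
    apply slope_ge R a (q0/2) ρ ρ' haR (fun x hx => hd x (hsub hx))
    intro x hx
    have h := hineq x (hsub hx)
    nlinarith [sq_nonneg (ρ x)]
  have hρa : 1 ≤ ρ a := by
    have : q0 / 2 * (a - R) = 1 + |ρ R| := by
      field_simp [ha_def]
      rw [ha_def, mul_sub, mul_add, mul_div_cancel₀ (2 * (1 + |ρ R|)) hq0.ne']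
      ring
    rw [this] at h1
    have habs := neg_abs_le (ρ R)
    linarith
  have hρ_ge : ∀ b ∈ Ici a, 1 ≤ ρ b := by
    intro b hb
    have hsub2 : Icc a b ⊆ Ici R := fun x hx => le_trans haR hx.1
    have := slope_ge a b 0 ρ ρ' hb (fun x hx => hd x (hsub2 hx))
      (fun x hx => by have := hineq x (hsub2 hx); nlinarith [sq_nonneg (ρ x)])
    linarith
  set b : ℝ := a + 4 with hb_def
  have hab : a ≤ b := by rw [hb_def]; linarith
  have hsub3 : Icc a b ⊆ Ici R := fun x hx => le_trans haR hx.1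
  have hne : ∀ x ∈ Icc a b, ρ x ≠ 0 := fun x hx => by
    have := hρ_ge x hx.1; linarith
  have hσd : ∀ x ∈ Icc a b, HasDerivAt (fun y => (ρ y)⁻¹) (-(ρ' x) / (ρ x) ^ 2) x :=
    fun x hx => (hd x (hsub3 hx)).inv (hne x hx)
  have hσb : (ρ b)⁻¹ - (ρ a)⁻¹ ≤ -(1/2) * (b - a) := by
    apply slope_le a b (-(1/2)) _ _ hab hσd
    intro x hx
    have h1 := hρ_ge x hx.1
    have h2 := hineq x (hsub3 hx)
    have hρx : (0:ℝ) < ρ x := by linarith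
    rw [div_le_iff₀ (by positivity)]
    linarith [sq_nonneg (ρ x), hq0.le]
  have hσa : (ρ a)⁻¹ ≤ 1 := by
    have h1 := hρ_ge a (mem_Ici.2 le_rfl)
    exact inv_le_one_of_one_le₀ h1
  have hσbpos : 0 < (ρ b)⁻¹ := by
    have h1 := hρ_ge b (mem_Ici.2 (by rw [hb_def]; linarith))
    have : (0:ℝ) < ρ b := by linarith
    positivity
  have : b - a = 4 := by rw [hb_def]; ring
  rw [this] at hσb
  linarith

/-- Main oscillation engine: a positive function on a ray satisfying
`u'' ≤ (Γ/r)|u'| − q₀ u` cannot exist. -/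
lemma riccati_osc (r0 Γ q0 : ℝ) (hr0 : 0 ≤ r0) (hΓ : 0 ≤ Γ) (hq0 : 0 < q0)
    (u u1 u2 : ℝ → ℝ)
    (h1 : ∀ r ∈ Ioi r0, HasDerivAt u (u1 r) r)
    (h2 : ∀ r ∈ Ioi r0, HasDerivAt u1 (u2 r) r)
    (hpos : ∀ r ∈ Ioi r0, 0 < u r)
    (hineq : ∀ r ∈ Ioi r0, u2 r ≤ Γ / r * |u1 r| - q0 * u r) : False := by
  set s0 : ℝ := Real.sqrt q0 with hs0_def
  have hs0 : 0 < s0 := Real.sqrt_pos.2 hq0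
  have hs0q : s0 ^ 2 = q0 := Real.sq_sqrt hq0.le
  set R : ℝ := max (r0 + 1) (Γ / s0 + 1) with hR_def
  have hRmem : ∀ r ∈ Ici R, r ∈ Ioi r0 := by
    intro r hr
    have : r0 + 1 ≤ R := le_max_left _ _
    simp only [mem_Ici] at hr
    simp only [mem_Ioi]
    linarith
  have hRpos : ∀ r ∈ Ici R, 0 < r := fun r hr => lt_of_le_of_lt hr0 (hRmem r hr)
  have hΓr : ∀ r ∈ Ici R, Γ / r ≤ s0 := by
    intro r hr
    have hrpos := hRpos r hr
    rw [div_le_iff₀ hrpos]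
    have h1 : Γ / s0 + 1 ≤ R := le_max_right _ _
    have h2 : R ≤ r := hr
    have : Γ / s0 ≤ r := by linarith
    calc Γ = s0 * (Γ / s0) := by field_simp
    _ ≤ s0 * r := by nlinarith
  set ρ : ℝ → ℝ := fun r => -(u1 r) / u r with hρ_def
  set ρ' : ℝ → ℝ := fun r => (-(u2 r) * u r - -(u1 r) * u1 r) / (u r) ^ 2 with hρ'_def
  have hd : ∀ r ∈ Ici R, HasDerivAt ρ (ρ' r) r := by
    intro r hr
    exact ((h2 r (hRmem r hr)).neg).div (h1 r (hRmem r hr)) (ne_of_gt (hpos r (hRmem r hr)))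
  apply riccati_blowup R q0 hq0 ρ ρ' hd
  intro r hr
  have hA : 0 < u r := hpos r (hRmem r hr)
  have hi := hineq r (hRmem r hr)
  have hg : Γ / r * |u1 r| ≤ s0 * |u1 r| :=
    mul_le_mul_of_nonneg_right (hΓr r hr) (abs_nonneg _)
  have hu2 : u2 r ≤ s0 * |u1 r| - q0 * u r := by linarith
  simp only [hρ_def, hρ'_def]
  rw [div_le_div_iff₀ (by norm_num) (by positivity)]
  have habs : |u1 r| ^ 2 = u1 r ^ 2 := sq_abs _
  have hsq : (-u1 r / u r) ^ 2 * u r ^ 2 = u1 r ^ 2 := by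
    field_simp
  have hmul : u2 r * u r ≤ (s0 * |u1 r| - q0 * u r) * u r :=
    mul_le_mul_of_nonneg_right hu2 hA.le
  nlinarith [sq_nonneg (s0 * u r - |u1 r|)]

variable {lam Lam : ℝ}

lemma abs_mfun_le (hlam : 0 < lam) (hlL : lam ≤ Lam) (x : ℝ) :
    |mfun lam Lam x| ≤ Lam * |x| := by
  unfold mfun
  split_ifs with h
  · rw [abs_mul, abs_of_pos (lt_of_lt_of_le hlam hlL)]
  · rw [abs_mul, abs_of_pos hlam]
    have : 0 ≤ Lam := le_trans hlam.le hlL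
    nlinarith [abs_nonneg x]

lemma Mfun_le_div (hlam : 0 < lam) (hlL : lam ≤ Lam) (t : ℝ) :
    Mfun lam Lam t ≤ t / lam := by
  unfold Mfun
  split_ifs with h
  · gcongr
  · exact le_refl _

lemma bound_pos (hlam : 0 < lam) (hlL : lam ≤ Lam) {c x y : ℝ} (hc : 0 ≤ c) (hy : 0 < y) :
    Mfun lam Lam (-c * mfun lam Lam x - y) ≤ c * Lam / lam * |x| - y / Lam := by
  have hLam : 0 < Lam := lt_of_lt_of_le hlam hlL
  have hm : -(mfun lam Lam x) ≤ Lam * |x| := by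
    have := abs_mfun_le hlam hlL x
    have := neg_abs_le (mfun lam Lam x)
    linarith
  have hs : -c * mfun lam Lam x - y ≤ c * (Lam * |x|) - y := by
    nlinarith
  calc Mfun lam Lam (-c * mfun lam Lam x - y)
      ≤ (-c * mfun lam Lam x - y) / lam := Mfun_le_div hlam hlL _
    _ ≤ (c * (Lam * |x|) - y) / lam := by gcongr
    _ = c * Lam / lam * |x| - y / lam := by ring
    _ ≤ c * Lam / lam * |x| - y / Lam := by gcongr

lemma bound_neg (hlam : 0 < lam) (hlL : lam ≤ Lam) {c x y : ℝ} (hc : 0 ≤ c) (hy : y < 0) :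
    -Mfun lam Lam (-c * mfun lam Lam x - y) ≤ c * Lam / lam * |x| - -y / Lam := by
  have hLam : 0 < Lam := lt_of_lt_of_le hlam hlL
  have hm : mfun lam Lam x ≤ Lam * |x| := le_trans (le_abs_self _) (abs_mfun_le hlam hlL x)
  set t : ℝ := -c * mfun lam Lam x - y with ht
  have hs : -t ≤ c * (Lam * |x|) + y := by rw [ht]; nlinarith
  have hB : 0 ≤ c * (Lam * |x|) := by positivity
  unfold Mfun
  split_ifs with h
  · have : -t / Lam ≤ (c * (Lam * |x|) + y) / Lam := by gcongr
    calc -(t / Lam) = -t / Lam := by ring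
      _ ≤ (c * (Lam * |x|) + y) / Lam := this
      _ = c * (Lam * |x|) / Lam + y / Lam := by ring
      _ ≤ c * (Lam * |x|) / lam + y / Lam := by gcongr
      _ = c * Lam / lam * |x| - -y / Lam := by ring
  · have : -t / lam ≤ (c * (Lam * |x|) + y) / lam := by gcongr
    calc -(t / lam) = -t / lam := by ring
      _ ≤ (c * (Lam * |x|) + y) / lam := this
      _ = c * Lam / lam * |x| + y / lam := by ring
      _ ≤ c * Lam / lam * |x| + y / Lam := by
          have : y / lam ≤ y / Lam := by
            rw [div_le_div_iff₀ hlam hLam]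
            nlinarith
          linarith
      _ = c * Lam / lam * |x| - -y / Lam := by ring

end Stmt14Aux

open Stmt14Aux in
/-- the solution of the radial initial value problem is oscillatory. -/
theorem stmt_14 (N : ℕ) (hN : 1 ≤ N) (lam Lam : ℝ) (hlam : 0 < lam) (hlL : lam ≤ Lam)
    (w : ℝ → ℝ) (hw : RadialIVPSol N lam Lam w) :
    ∀ r > (0:ℝ), ∃ τ > r, w τ = 0 := by
  obtain ⟨hC1, hC2, hw0, hd0, hODE⟩ := hw
  have hLam : 0 < Lam := lt_of_lt_of_le hlam hlL
  have hNR : (1:ℝ) ≤ (N:ℝ) := by exact_mod_cast hN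
  have hdiff1 : ∀ r ∈ Set.Ioi (0:ℝ), HasDerivAt w (deriv w r) r := fun r hr =>
    ((hC2.differentiableOn (by norm_num)).differentiableAt (isOpen_Ioi.mem_nhds hr)).hasDerivAt
  have hC2' : ContDiffOn ℝ 1 (deriv w) (Set.Ioi 0) :=
    hC2.deriv_of_isOpen isOpen_Ioi (by norm_num)
  have hdiff2 : ∀ r ∈ Set.Ioi (0:ℝ), HasDerivAt (deriv w) (deriv (deriv w) r) r := fun r hr =>
    ((hC2'.differentiableOn one_ne_zero).differentiableAt (isOpen_Ioi.mem_nhds hr)).hasDerivAt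
  intro r0 hr0
  by_contra hcon
  push_neg at hcon
  have hmem : ∀ r ∈ Set.Ioi r0, r ∈ Set.Ioi (0:ℝ) := fun r hr => lt_trans hr0 hr
  set Γ : ℝ := ((N:ℝ) - 1) * Lam / lam with hΓ_def
  have hΓ : 0 ≤ Γ := by
    apply div_nonneg _ hlam.le
    apply mul_nonneg (by linarith) hLam.le
  have hq0 : (0:ℝ) < 1 / Lam := by positivity
  have hcont : ContinuousOn w (Set.Ioi r0) :=
    (hC1.continuousOn).mono (fun x hx => le_of_lt (lt_trans hr0 hx))
  have hcoef : ∀ r ∈ Set.Ioi r0, 0 ≤ ((N:ℝ) - 1) / r := by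
    intro r hr
    have : (0:ℝ) < r := hmem r hr
    apply div_nonneg (by linarith) this.le
  have hΓeq : ∀ r ∈ Set.Ioi r0, ((N:ℝ) - 1) / r * Lam / lam = Γ / r := by
    intro r hr
    have hrne : r ≠ 0 := ne_of_gt (hmem r hr)
    rw [hΓ_def]
    field_simp
  by_cases hpos : ∀ τ ∈ Set.Ioi r0, 0 < w τ
  · -- w positive on the ray: contradiction
    apply riccati_osc r0 Γ (1/Lam) hr0.le hΓ hq0 w (deriv w) (deriv (deriv w))
      (fun r hr => hdiff1 r (hmem r hr)) (fun r hr => hdiff2 r (hmem r hr)) hpos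
    intro r hr
    rw [hODE r (hmem r hr)]
    have hb := bound_pos hlam hlL (c := ((N:ℝ) - 1) / r) (x := deriv w r) (y := w r)
      (hcoef r hr) (hpos r hr)
    calc Mfun lam Lam (-(((N:ℝ) - 1) / r) * mfun lam Lam (deriv w r) - w r)
        ≤ ((N:ℝ) - 1) / r * Lam / lam * |deriv w r| - w r / Lam := hb
      _ = Γ / r * |deriv w r| - 1 / Lam * w r := by
          rw [hΓeq r hr]; ring
  · -- w is somewhere ≤ 0, hence (never being 0) negative everywhere on the ray
    push_neg at hpos
    obtain ⟨τ1, hτ1, hwτ1⟩ := hpos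
    have hwτ1' : w τ1 < 0 := lt_of_le_of_ne hwτ1 (hcon τ1 hτ1)
    have hneg : ∀ τ ∈ Set.Ioi r0, w τ < 0 := by
      intro τ hτ
      by_contra hge
      push_neg at hge
      have hgt : 0 < w τ := lt_of_le_of_ne hge (Ne.symm (hcon τ hτ))
      have hsub : Set.uIcc τ1 τ ⊆ Set.Ioi r0 := by
        intro x hx
        rw [Set.mem_uIcc] at hx
        simp only [Set.mem_Ioi] at hτ1 hτ ⊢
        rcases hx with ⟨h1, _⟩ | ⟨h1, _⟩ <;> linarith
      have hivt := intermediate_value_uIcc (hcont.mono hsub)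
      have h0 : (0:ℝ) ∈ Set.uIcc (w τ1) (w τ) := by
        rw [Set.mem_uIcc]
        left
        exact ⟨hwτ1'.le, hgt.le⟩
      obtain ⟨c0, hc0, hwc0⟩ := hivt h0
      exact hcon c0 (hsub hc0) hwc0
    apply riccati_osc r0 Γ (1/Lam) hr0.le hΓ hq0
      (fun r => -(w r)) (fun r => -(deriv w r)) (fun r => -(deriv (deriv w) r))
      (fun r hr => (hdiff1 r (hmem r hr)).neg) (fun r hr => (hdiff2 r (hmem r hr)).neg)
      (fun r hr => by linarith [hneg r hr])
    intro r hr
    rw [hODE r (hmem r hr)]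
    have hb := bound_neg hlam hlL (c := ((N:ℝ) - 1) / r) (x := deriv w r) (y := w r)
      (hcoef r hr) (hneg r hr)
    rw [abs_neg]
    calc -Mfun lam Lam (-(((N:ℝ) - 1) / r) * mfun lam Lam (deriv w r) - w r)
        ≤ ((N:ℝ) - 1) / r * Lam / lam * |deriv w r| - -(w r) / Lam := hb
      _ = Γ / r * |deriv w r| - 1 / Lam * -(w r) := by
          rw [hΓeq r hr]; ring
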